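/- Let R ≥ 1 be real, let w ∈ ℂ with |w| ≤ R, and let x be a real number with 0 ≤ x ≤ 1/2. Then |(1+x)^w − 1| ≤ x·|w|·(1 + (1/2)·e^{2R}). -/

import Mathlib

open Complex

lemma abs_exp_sub_one_le' (z : ℂ) :
    ‖Complex.exp z - 1‖ ≤ ‖z‖ * Real.exp (‖z‖) := by
  have h := Convex.norm_image_sub_le_of_norm_hasDerivWithin_le
    (f := Complex.exp) (f' := Complex.exp) (s := Metric.closedBall (0 : ℂ) (‖z‖))
    (C := Real.exp (‖z‖))
    (fun u _ => (Complex.hasDerivAt_exp u).hasDerivWithinAt)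
    (fun u hu => by
      simp only [Metric.mem_closedBall, dist_zero_right] at hu
      rw [Complex.norm_exp]
      exact Real.exp_le_exp.2 ((u.re_le_norm).trans hu))
    (convex_closedBall _ _)
    (Metric.mem_closedBall_self (norm_nonneg _))
    (show z ∈ Metric.closedBall (0 : ℂ) (‖z‖) by
      simp [Metric.mem_closedBall, Complex.dist_eq])
  simpa [Complex.exp_zero, mul_comm] using h

theorem cpow_one_add_sub_one_bound (R : ℝ) (hR : 1 ≤ R) (w : ℂ) (hw : ‖w‖ ≤ R)
    (x : ℝ) (hx0 : 0 ≤ x) (hx : x ≤ 1 / 2) :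
    ‖(((1 + x : ℝ) : ℂ) ^ w) - 1‖ ≤
      x * ‖w‖ * (1 + (1 / 2) * Real.exp (2 * R)) := by
  have hx1 : (0 : ℝ) < 1 + x := by linarith
  have hlog0 : 0 ≤ Real.log (1 + x) := Real.log_nonneg (by linarith)
  have hlogx : Real.log (1 + x) ≤ x := by
    have := Real.log_le_sub_one_of_pos hx1
    linarith
  have hpow : (((1 + x : ℝ) : ℂ) ^ w) = Complex.exp (w * Real.log (1 + x)) := by
    rw [Complex.cpow_def_of_ne_zero (by exact_mod_cast hx1.ne'),
      Complex.ofReal_log hx1.le]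
    ring_nf
  rw [hpow]
  have habs : ‖w * Real.log (1 + x)‖ = ‖w‖ * Real.log (1 + x) := by
    rw [norm_mul, Complex.norm_real, Real.norm_eq_abs, _root_.abs_of_nonneg hlog0]
  have h1 := abs_exp_sub_one_le' (w * Real.log (1 + x))
  rw [habs] at h1
  have hz : ‖w‖ * Real.log (1 + x) ≤ R / 2 := by
    have : ‖w‖ * Real.log (1 + x) ≤ R * x :=
      mul_le_mul hw (hlogx) hlog0 (by linarith)
    nlinarith
  have hexp : Real.exp (‖w‖ * Real.log (1 + x)) ≤ (1 / 2) * Real.exp (2 * R) := by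
    have h2 : Real.exp (‖w‖ * Real.log (1 + x)) ≤ Real.exp (R / 2) :=
      Real.exp_le_exp.2 hz
    have h3 : Real.exp (R / 2) * 2 ≤ Real.exp (2 * R) := by
      have : (2 : ℝ) ≤ Real.exp (3 / 2 * R) := by
        have := Real.add_one_le_exp (3 / 2 * R)
        linarith
      calc Real.exp (R / 2) * 2 ≤ Real.exp (R / 2) * Real.exp (3 / 2 * R) := by
            exact mul_le_mul_of_nonneg_left this (Real.exp_nonneg _)
        _ = Real.exp (2 * R) := by rw [← Real.exp_add]; ring_nf
    linarith
  calc ‖Complex.exp (w * Real.log (1 + x)) - 1‖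
      ≤ ‖w‖ * Real.log (1 + x) * Real.exp (‖w‖ * Real.log (1 + x)) := h1
    _ ≤ ‖w‖ * x * ((1 / 2) * Real.exp (2 * R)) := by
        apply mul_le_mul (by exact mul_le_mul_of_nonneg_left hlogx (norm_nonneg _))
          hexp (Real.exp_nonneg _)
        positivity
    _ ≤ x * ‖w‖ * (1 + (1 / 2) * Real.exp (2 * R)) := by
        rw [mul_comm (‖w‖) x]
        have := Real.exp_nonneg (2 * R)
        have := norm_nonneg w
        nlinarith
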